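/- Suppose L is a lattice in ℝ^d with generating vectors v_1,…,v_d such that B_{d,k} + L = ℝ^d. Then there is a constant c such that for all sufficiently large real numbers t the following holds: if w_i ∈ ℤ^d is obtained from t·v_i by rounding each coordinate to the nearest integer, and L̄ is the lattice generated by w_1,…,w_d, then B_{d, tk+c} + L̄ = ℝ^d. The same statement holds with the simplices T_{d,k} and T_{d, tk+c} in place of B_{d,k} and B_{d, tk+c}. -/

import Mathlib

lemma zspan_mem {d : ℕ} (w : Fin d → Fin d → ℝ) (x : Fin d → ℝ) :
    x ∈ AddSubgroup.closure (Set.range w) ↔ ∃ n : Fin d → ℤ, x = ∑ i, n i • w i := by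
  constructor
  · intro hx
    induction hx using AddSubgroup.closure_induction with
    | mem z hz =>
      obtain ⟨i, rfl⟩ := hz
      refine ⟨fun j => if j = i then 1 else 0, ?_⟩
      simp [ite_smul]
    | zero => exact ⟨0, by simp⟩
    | add a b ha' hb' ha hb =>
      obtain ⟨n, hn⟩ := ha; obtain ⟨m, hm⟩ := hb
      refine ⟨n + m, ?_⟩
      rw [hn, hm, ← Finset.sum_add_distrib]
      refine Finset.sum_congr rfl fun i _ => ?_
      simp [add_smul]
    | neg a ha' ha =>
      obtain ⟨n, hn⟩ := ha
      refine ⟨-n, ?_⟩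
      rw [hn, ← Finset.sum_neg_distrib]
      refine Finset.sum_congr rfl fun i _ => ?_
      simp
  · rintro ⟨n, rfl⟩
    exact AddSubgroup.sum_mem _ fun i _ =>
      AddSubgroup.zsmul_mem _ (AddSubgroup.subset_closure (Set.mem_range_self i)) _

lemma coeff_bound {d : ℕ} (v : Fin d → Fin d → ℝ) (hdet : IsUnit (Matrix.of v).det)
    (n : Fin d → ℤ) (x : Fin d → ℝ) (hx : x = ∑ i, n i • v i) (i : Fin d) :
    |(n i : ℝ)| ≤ (∑ a, ∑ b, |(Matrix.of v)⁻¹ a b|) * ∑ j, |x j| := by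
  set Q := ∑ a, ∑ b, |(Matrix.of v)⁻¹ a b| with hQdef
  have hQ0 : 0 ≤ Q := Finset.sum_nonneg fun a _ => Finset.sum_nonneg fun b _ => abs_nonneg _
  have hentry : ∀ a b, |(Matrix.of v)⁻¹ a b| ≤ Q := by
    intro a b
    calc |(Matrix.of v)⁻¹ a b| ≤ ∑ b', |(Matrix.of v)⁻¹ a b'| :=
          Finset.single_le_sum (f := fun b' => |(Matrix.of v)⁻¹ a b'|)
            (fun b' _ => abs_nonneg _) (Finset.mem_univ b)
      _ ≤ Q := Finset.single_le_sum (f := fun a' => ∑ b', |(Matrix.of v)⁻¹ a' b'|)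
          (fun a' _ => Finset.sum_nonneg fun b' _ => abs_nonneg _) (Finset.mem_univ a)
  have h1 : x = Matrix.vecMul (fun i => (n i : ℝ)) (Matrix.of v) := by
    funext j
    rw [hx]
    simp [Matrix.vecMul, dotProduct, Finset.sum_apply]
  have key : (fun i => (n i : ℝ)) = Matrix.vecMul x (Matrix.of v)⁻¹ := by
    rw [h1, Matrix.vecMul_vecMul, Matrix.mul_nonsing_inv _ hdet, Matrix.vecMul_one]
  have h2 : (n i : ℝ) = ∑ j, x j * (Matrix.of v)⁻¹ j i := by
    rw [congrFun key i]
    simp [Matrix.vecMul, dotProduct]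
  rw [h2]
  calc |∑ j, x j * (Matrix.of v)⁻¹ j i| ≤ ∑ j, |x j * (Matrix.of v)⁻¹ j i| :=
        Finset.abs_sum_le_sum_abs _ _
    _ ≤ ∑ j, |x j| * Q := by
        refine Finset.sum_le_sum fun j _ => ?_
        rw [abs_mul]
        exact mul_le_mul_of_nonneg_left (hentry j i) (abs_nonneg _)
    _ = Q * ∑ j, |x j| := by rw [← Finset.sum_mul, mul_comm]

lemma reduce_lattice {d : ℕ} (w : Fin d → Fin d → ℝ) (hdet : IsUnit (Matrix.of w).det)
    (y : Fin d → ℝ) :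
    ∃ m : Fin d → ℤ, ∀ j, |y j - (∑ i, m i • w i) j| ≤ ∑ i, |w i j| := by
  set c := Matrix.vecMul y (Matrix.of w)⁻¹ with hc
  have hcy : Matrix.vecMul c (Matrix.of w) = y := by
    rw [hc, Matrix.vecMul_vecMul, Matrix.nonsing_inv_mul _ hdet, Matrix.vecMul_one]
  refine ⟨fun i => ⌊c i⌋, fun j => ?_⟩
  have h1 : y j - (∑ i, (⌊c i⌋ : ℤ) • w i) j = ∑ i, (c i - ⌊c i⌋) * w i j := by
    have hy : y j = ∑ i, c i * w i j := by
      rw [← congrFun hcy j]; simp [Matrix.vecMul, dotProduct]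
    have hs : (∑ i, (⌊c i⌋ : ℤ) • w i) j = ∑ i, (⌊c i⌋ : ℝ) * w i j := by
      simp [Finset.sum_apply]
    rw [hy, hs, ← Finset.sum_sub_distrib]
    exact Finset.sum_congr rfl fun i _ => by ring
  rw [h1]
  calc |∑ i, (c i - ⌊c i⌋) * w i j| ≤ ∑ i, |(c i - ⌊c i⌋) * w i j| :=
        Finset.abs_sum_le_sum_abs _ _
    _ ≤ ∑ i, |w i j| := by
        refine Finset.sum_le_sum fun i _ => ?_
        rw [abs_mul]
        have h2 : |c i - (⌊c i⌋ : ℝ)| ≤ 1 := by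
          rw [abs_of_nonneg (by linarith [Int.floor_le (c i)])]
          linarith [Int.lt_floor_add_one (c i)]
        nlinarith [abs_nonneg (w i j), abs_nonneg (c i - (⌊c i⌋:ℝ))]

lemma det_round_eventually {d : ℕ} (v : Fin d → Fin d → ℝ)
    (hdet : (Matrix.of v).det ≠ 0) :
    ∃ t₁ : ℝ, 1 ≤ t₁ ∧ ∀ t : ℝ, t₁ ≤ t →
      IsUnit (Matrix.of fun i j => ((round (t * v i j) : ℤ) : ℝ)).det := by
  have hF : Continuous fun A : Fin d → Fin d → ℝ => (Matrix.of A).det := by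
    simp only [Matrix.det_apply']
    refine continuous_finset_sum _ fun σ _ => Continuous.mul continuous_const ?_
    exact continuous_finset_prod _ fun i _ => (continuous_apply i).comp (continuous_apply (σ i))
  have hopen : IsOpen {A : Fin d → Fin d → ℝ | (Matrix.of A).det ≠ 0} := by
    have : {A : Fin d → Fin d → ℝ | (Matrix.of A).det ≠ 0}
        = (fun A : Fin d → Fin d → ℝ => (Matrix.of A).det) ⁻¹' {(0:ℝ)}ᶜ := rfl
    rw [this]
    exact hF.isOpen_preimage _ (isOpen_compl_singleton)
  obtain ⟨ε, hε, hball⟩ := Metric.isOpen_iff.mp hopen v hdet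
  refine ⟨max 1 (2 / ε), le_max_left _ _, fun t ht => ?_⟩
  have ht1 : (1:ℝ) ≤ t := le_trans (le_max_left _ _) ht
  have ht0 : (0:ℝ) < t := by linarith
  set A : Fin d → Fin d → ℝ :=
    fun i j => v i j + (((round (t * v i j) : ℤ) : ℝ) - t * v i j) / t with hA
  have hmem : A ∈ Metric.ball v ε := by
    rw [Metric.mem_ball]
    by_cases hd : d = 0
    · subst hd
      have : A = v := by funext i; exact absurd i.2 (by omega)
      simpa [this] using hε
    · have : Nonempty (Fin d) := ⟨⟨0, Nat.pos_of_ne_zero hd⟩⟩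
      rw [dist_pi_lt_iff hε]
      intro i
      rw [dist_pi_lt_iff hε]
      intro j
      rw [Real.dist_eq]
      have h0 : A i j - v i j = (((round (t * v i j) : ℤ) : ℝ) - t * v i j) / t := by
        rw [hA]; ring
      rw [h0, abs_div, abs_of_pos ht0]
      have h2 : |((round (t * v i j) : ℤ) : ℝ) - t * v i j| ≤ 1 / 2 := by
        rw [abs_sub_comm]; exact abs_sub_round _
      have h3 : 2 / ε ≤ t := le_trans (le_max_right _ _) ht
      have h4 : 2 / t ≤ ε := by
        rw [div_le_iff₀ ht0]
        rw [div_le_iff₀ hε] at h3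
        linarith
      have h5 : 2 ≤ ε * t := by
        rw [div_le_iff₀ ht0] at h4; linarith
      calc |((round (t * v i j) : ℤ) : ℝ) - t * v i j| / t ≤ (1/2) / t := by gcongr
        _ < ε := by rw [div_lt_iff₀ ht0]; linarith
  have hAdet : (Matrix.of A).det ≠ 0 := hball hmem
  have hW : (Matrix.of fun i j => ((round (t * v i j) : ℤ) : ℝ)) = t • Matrix.of A := by
    ext i j
    simp only [Matrix.of_apply, Matrix.smul_apply, hA, smul_eq_mul]
    field_simp
    ring
  rw [hW, Matrix.det_smul]
  rw [isUnit_iff_ne_zero]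
  exact mul_ne_zero (pow_ne_zero _ (ne_of_gt ht0)) hAdet

lemma step_lemma {d : ℕ} (v : Fin d → Fin d → ℝ) (hdet : IsUnit (Matrix.of v).det)
    (K t : ℝ) (x : Fin d → ℝ) (hx : ∑ j, |x j| ≤ K)
    (hmem : x ∈ AddSubgroup.closure (Set.range v)) :
    ∃ n : Fin d → ℤ, x = ∑ i, n i • v i ∧
      ∀ j, |∑ i, (n i : ℝ) * (t * v i j - ((round (t * v i j) : ℤ) : ℝ))|
          ≤ d * ((∑ a, ∑ b, |(Matrix.of v)⁻¹ a b|) * K) / 2 := by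
  set Q := ∑ a, ∑ b, |(Matrix.of v)⁻¹ a b| with hQ
  have hQ0 : 0 ≤ Q := Finset.sum_nonneg fun a _ => Finset.sum_nonneg fun b _ => abs_nonneg _
  obtain ⟨n, hn⟩ := (zspan_mem v x).mp hmem
  refine ⟨n, hn, fun j => ?_⟩
  have hbound : ∀ i, |(n i : ℝ)| ≤ Q * K := fun i =>
    (coeff_bound v hdet n x hn i).trans (mul_le_mul_of_nonneg_left hx hQ0)
  calc |∑ i, (n i : ℝ) * (t * v i j - ((round (t * v i j) : ℤ) : ℝ))|
      ≤ ∑ i, |(n i : ℝ) * (t * v i j - ((round (t * v i j) : ℤ) : ℝ))| :=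
        Finset.abs_sum_le_sum_abs _ _
    _ ≤ ∑ _i : Fin d, (Q * K) * (1/2) := by
        refine Finset.sum_le_sum fun i _ => ?_
        rw [abs_mul]
        exact mul_le_mul (hbound i) (abs_sub_round _) (abs_nonneg _)
          (le_trans (abs_nonneg _) (hbound i))
    _ = d * (Q * K) / 2 := by
        rw [Finset.sum_const, Finset.card_univ, Fintype.card_fin]
        push_cast; ring

/-- Suppose the lattice `L` generated by linearly independent vectors
`v 1, …, v d` satisfies `B_{d,k} + L = ℝ^d`. Then there is a constant `c` such that
for all sufficiently large `t`, the lattice `L̄` generated by the vectors `w i`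
obtained from `t • v i` by rounding each coordinate to the nearest integer satisfies
`B_{d,tk+c} + L̄ = ℝ^d`; and likewise for the simplices `T_{d,k}`, `T_{d,tk+c}`. -/
theorem stmt7 (d : ℕ) (k : ℝ) (hk : 0 ≤ k)
    (v : Fin d → (Fin d → ℝ)) (hv : LinearIndependent ℝ v) :
    ((∀ y : Fin d → ℝ, ∃ b : Fin d → ℝ, (∑ i, |b i|) ≤ k ∧
        y - b ∈ AddSubgroup.closure (Set.range v)) →
      ∃ c : ℝ, ∃ t₀ : ℝ, ∀ t : ℝ, t₀ ≤ t →
        ∀ y : Fin d → ℝ, ∃ b : Fin d → ℝ, (∑ i, |b i|) ≤ t * k + c ∧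
          y - b ∈ AddSubgroup.closure
            (Set.range fun i => fun j => ((round (t * v i j) : ℤ) : ℝ))) ∧
    ((∀ y : Fin d → ℝ, ∃ b : Fin d → ℝ, (∀ i, 0 ≤ b i) ∧ (∑ i, b i) ≤ k ∧
        y - b ∈ AddSubgroup.closure (Set.range v)) →
      ∃ c : ℝ, ∃ t₀ : ℝ, ∀ t : ℝ, t₀ ≤ t →
        ∀ y : Fin d → ℝ, ∃ b : Fin d → ℝ, (∀ i, 0 ≤ b i) ∧ (∑ i, b i) ≤ t * k + c ∧
          y - b ∈ AddSubgroup.closure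
            (Set.range fun i => fun j => ((round (t * v i j) : ℤ) : ℝ))) := by
  classical
  have hUnit : IsUnit (Matrix.of v) := Matrix.linearIndependent_rows_iff_isUnit.mp hv
  have hdet : IsUnit (Matrix.of v).det := (Matrix.isUnit_iff_isUnit_det _).mp hUnit
  have hdet0 : (Matrix.of v).det ≠ 0 := hdet.ne_zero
  set Q := ∑ a, ∑ b, |(Matrix.of v)⁻¹ a b| with hQdef
  have hQ0 : 0 ≤ Q := Finset.sum_nonneg fun a _ => Finset.sum_nonneg fun b _ => abs_nonneg _
  set S := ∑ i, ∑ j, |v i j| with hSdef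
  have hS0 : 0 ≤ S := Finset.sum_nonneg fun a _ => Finset.sum_nonneg fun b _ => abs_nonneg _
  obtain ⟨t₁, ht₁, hWdet⟩ := det_round_eventually v hdet0
  set K := S + 1 + k with hKdef
  have hK0 : 0 ≤ K := by simp [hKdef]; linarith
  set E := (d : ℝ) * (Q * K) / 2 with hEdef
  have hE0 : 0 ≤ E := by positivity
  set t₀ := max t₁ ((d:ℝ) * d / 2 + d * E + 1) with ht₀def
  -- common facts
  have common : ∀ t : ℝ, t₀ ≤ t → ∀ y : Fin d → ℝ,
      ∃ m : Fin d → ℤ,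
        ∑ j, |(y - ∑ i, m i • (fun j' => ((round (t * v i j') : ℤ) : ℝ))) j|
          ≤ t * S + d * d / 2 := by
    intro t ht y
    have ht1 : (1:ℝ) ≤ t := le_trans ht₁ (le_trans (le_max_left _ _) ht)
    have ht0 : (0:ℝ) < t := by linarith
    have hWt := hWdet t (le_trans (le_max_left _ _) ht)
    obtain ⟨m, hm⟩ := reduce_lattice (fun i j => ((round (t * v i j) : ℤ) : ℝ)) hWt y
    refine ⟨m, ?_⟩
    calc ∑ j, |(y - ∑ i, m i • (fun j' => ((round (t * v i j') : ℤ) : ℝ))) j|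
        ≤ ∑ j, ∑ i, |((round (t * v i j) : ℤ) : ℝ)| := Finset.sum_le_sum fun j _ => hm j
      _ = ∑ i, ∑ j, |((round (t * v i j) : ℤ) : ℝ)| := Finset.sum_comm
      _ ≤ ∑ i, ∑ j, (t * |v i j| + 1/2) := by
          refine Finset.sum_le_sum fun i _ => Finset.sum_le_sum fun j _ => ?_
          have h1 := abs_sub_round (t * v i j)
          have h2 : |((round (t * v i j) : ℤ) : ℝ)| ≤ |t * v i j| + 1/2 := by
            have := abs_sub_abs_le_abs_sub ((round (t * v i j) : ℝ)) (t * v i j)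
            rw [abs_sub_comm] at this
            linarith
          rw [abs_mul, abs_of_pos ht0] at h2
          exact h2
      _ = t * S + d * d / 2 := by
          rw [hSdef]
          simp only [Finset.sum_add_distrib, Finset.sum_const, Finset.card_univ,
            Fintype.card_fin, nsmul_eq_mul, ← Finset.mul_sum]
          ring
  constructor
  · -- Part 1 : ℓ¹ balls
    intro cover
    refine ⟨2 * d * E, t₀, fun t ht y => ?_⟩
    have ht1 : (1:ℝ) ≤ t := le_trans ht₁ (le_trans (le_max_left _ _) ht)
    have ht0 : (0:ℝ) < t := by linarith
    have htb : (d:ℝ) * d / 2 + d * E + 1 ≤ t := le_trans (le_max_right _ _) ht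
    have hdE0 : 0 ≤ (d:ℝ) * E := mul_nonneg (Nat.cast_nonneg d) hE0
    obtain ⟨m, hy'⟩ := common t ht y
    set w : Fin d → Fin d → ℝ := fun i j => ((round (t * v i j) : ℤ) : ℝ) with hwdef
    set y' : Fin d → ℝ := y - ∑ i, m i • w i with hy'def
    obtain ⟨b', hb'sum, hb'mem⟩ := cover (t⁻¹ • y')
    set x : Fin d → ℝ := t⁻¹ • y' - b' with hxdef
    have hxsum : ∑ j, |x j| ≤ K := by
      have h1 : ∑ j, |x j| ≤ t⁻¹ * (∑ j, |y' j|) + ∑ j, |b' j| := by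
        rw [Finset.mul_sum, ← Finset.sum_add_distrib]
        refine Finset.sum_le_sum fun j _ => ?_
        have hxj : x j = t⁻¹ * y' j - b' j := rfl
        rw [hxj]
        calc |t⁻¹ * y' j - b' j| ≤ |t⁻¹ * y' j| + |b' j| := abs_sub _ _
          _ = t⁻¹ * |y' j| + |b' j| := by
              rw [abs_mul, abs_of_pos (inv_pos.mpr ht0)]
      have h2 : t⁻¹ * (∑ j, |y' j|) ≤ t⁻¹ * (t * S + d * d / 2) :=
        mul_le_mul_of_nonneg_left hy' (le_of_lt (inv_pos.mpr ht0))
      have h3 : t⁻¹ * (t * S + d * d / 2) ≤ S + 1 := by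
        rw [mul_add, ← mul_assoc, inv_mul_cancel₀ (ne_of_gt ht0), one_mul]
        have h4 : t⁻¹ * ((d:ℝ) * d / 2) ≤ t⁻¹ * t :=
          mul_le_mul_of_nonneg_left (by linarith) (le_of_lt (inv_pos.mpr ht0))
        rw [inv_mul_cancel₀ (ne_of_gt ht0)] at h4
        linarith
      rw [hKdef]
      linarith
    obtain ⟨n, hn, herr⟩ := step_lemma v hdet K t x hxsum hb'mem
    have herr' : ∀ j, |∑ i, (n i : ℝ) * (t * v i j - w i j)| ≤ E := by
      intro j; rw [hEdef, hQdef]; exact herr j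
    have hbj : ∀ j, (y' - ∑ i, n i • w i) j
        = t * b' j + ∑ i, (n i : ℝ) * (t * v i j - w i j) := by
      intro j
      have hxj : x j = ∑ i, (n i : ℝ) * v i j := by
        rw [hn]; simp [Finset.sum_apply]
      have hxj2 : x j = t⁻¹ * y' j - b' j := rfl
      have hyj : y' j = t * x j + t * b' j := by
        rw [hxj2]; field_simp; ring
      have h5 : (y' - ∑ i, n i • w i) j = y' j - ∑ i, (n i : ℝ) * w i j := by
        simp [Finset.sum_apply]
      rw [h5, hyj, hxj, Finset.mul_sum]
      have hsum : ∑ i, (n i : ℝ) * (t * v i j - w i j)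
          = ∑ i, t * ((n i : ℝ) * v i j) - ∑ i, (n i : ℝ) * w i j := by
        rw [← Finset.sum_sub_distrib]
        exact Finset.sum_congr rfl fun i _ => by ring
      rw [hsum]
      ring
    refine ⟨y' - ∑ i, n i • w i, ?_, ?_⟩
    · calc ∑ j, |(y' - ∑ i, n i • w i) j|
          ≤ ∑ j, (t * |b' j| + E) := by
            refine Finset.sum_le_sum fun j _ => ?_
            rw [hbj j]
            calc |t * b' j + ∑ i, (n i : ℝ) * (t * v i j - w i j)|
                ≤ |t * b' j| + |∑ i, (n i : ℝ) * (t * v i j - w i j)| := abs_add_le _ _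
              _ ≤ t * |b' j| + E := by
                  rw [abs_mul, abs_of_pos ht0]
                  exact add_le_add le_rfl (herr' j)
        _ = t * ∑ j, |b' j| + d * E := by
            rw [Finset.sum_add_distrib, Finset.mul_sum, Finset.sum_const,
              Finset.card_univ, Fintype.card_fin, nsmul_eq_mul]
        _ ≤ t * k + 2 * d * E := by
            have := mul_le_mul_of_nonneg_left hb'sum (le_of_lt ht0)
            linarith
    · have heq : y - (y' - ∑ i, n i • w i) = ∑ i, (m i + n i) • w i := by
        rw [hy'def]
        funext j
        simp only [Pi.sub_apply, Finset.sum_apply, Pi.add_apply, add_smul,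
          zsmul_eq_mul, Pi.mul_apply, Pi.intCast_apply]
        rw [Finset.sum_add_distrib]
        push_cast
        ring
      rw [heq]
      exact (zspan_mem w _).mpr ⟨fun i => m i + n i, rfl⟩
  · -- Part 2 : simplices
    intro cover
    refine ⟨2 * d * E, t₀, fun t ht y => ?_⟩
    have ht1 : (1:ℝ) ≤ t := le_trans ht₁ (le_trans (le_max_left _ _) ht)
    have ht0 : (0:ℝ) < t := by linarith
    have htb : (d:ℝ) * d / 2 + d * E + 1 ≤ t := le_trans (le_max_right _ _) ht
    have hdE0 : 0 ≤ (d:ℝ) * E := mul_nonneg (Nat.cast_nonneg d) hE0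
    obtain ⟨m, hy'⟩ := common t ht y
    set w : Fin d → Fin d → ℝ := fun i j => ((round (t * v i j) : ℤ) : ℝ) with hwdef
    set y' : Fin d → ℝ := y - ∑ i, m i • w i with hy'def
    obtain ⟨b', hb'0, hb'sum, hb'mem⟩ := cover (t⁻¹ • (y' - fun _ => E))
    set x : Fin d → ℝ := t⁻¹ • (y' - fun _ => E) - b' with hxdef
    have hxsum : ∑ j, |x j| ≤ K := by
      have h1 : ∑ j, |x j| ≤ t⁻¹ * (∑ j, |y' j|) + t⁻¹ * (d * E) + ∑ j, |b' j| := by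
        have h1a : ∀ j, |x j| ≤ t⁻¹ * |y' j| + t⁻¹ * E + |b' j| := by
          intro j
          have hxj : x j = t⁻¹ * (y' j - E) - b' j := rfl
          rw [hxj]
          calc |t⁻¹ * (y' j - E) - b' j| ≤ |t⁻¹ * (y' j - E)| + |b' j| := abs_sub _ _
            _ ≤ t⁻¹ * (|y' j| + E) + |b' j| := by
                rw [abs_mul, abs_of_pos (inv_pos.mpr ht0)]
                have : |y' j - E| ≤ |y' j| + E := by
                  calc |y' j - E| ≤ |y' j| + |E| := abs_sub _ _
                    _ = |y' j| + E := by rw [abs_of_nonneg hE0]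
                exact add_le_add
                  (mul_le_mul_of_nonneg_left this (le_of_lt (inv_pos.mpr ht0))) le_rfl
            _ = t⁻¹ * |y' j| + t⁻¹ * E + |b' j| := by ring
        calc ∑ j, |x j| ≤ ∑ j, (t⁻¹ * |y' j| + t⁻¹ * E + |b' j|) :=
              Finset.sum_le_sum fun j _ => h1a j
          _ = t⁻¹ * (∑ j, |y' j|) + t⁻¹ * (d * E) + ∑ j, |b' j| := by
              rw [Finset.sum_add_distrib, Finset.sum_add_distrib, ← Finset.mul_sum,
                Finset.sum_const, Finset.card_univ, Fintype.card_fin, nsmul_eq_mul]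
              ring
      have h2 : t⁻¹ * (∑ j, |y' j|) ≤ t⁻¹ * (t * S + d * d / 2) :=
        mul_le_mul_of_nonneg_left hy' (le_of_lt (inv_pos.mpr ht0))
      have h3 : t⁻¹ * (t * S + d * d / 2) + t⁻¹ * (d * E) ≤ S + 1 := by
        rw [mul_add, ← mul_assoc, inv_mul_cancel₀ (ne_of_gt ht0), one_mul]
        have h4 : t⁻¹ * ((d:ℝ) * d / 2) + t⁻¹ * (d * E) ≤ t⁻¹ * t := by
          rw [← mul_add]
          exact mul_le_mul_of_nonneg_left (by linarith) (le_of_lt (inv_pos.mpr ht0))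
        rw [inv_mul_cancel₀ (ne_of_gt ht0)] at h4
        linarith
      have h5 : ∑ j, |b' j| = ∑ j, b' j :=
        Finset.sum_congr rfl fun j _ => abs_of_nonneg (hb'0 j)
      rw [hKdef]
      rw [h5] at h1
      linarith
    obtain ⟨n, hn, herr⟩ := step_lemma v hdet K t x hxsum hb'mem
    have herr' : ∀ j, |∑ i, (n i : ℝ) * (t * v i j - w i j)| ≤ E := by
      intro j; rw [hEdef, hQdef]; exact herr j
    have hbj : ∀ j, (y' - ∑ i, n i • w i) j
        = E + t * b' j + ∑ i, (n i : ℝ) * (t * v i j - w i j) := by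
      intro j
      have hxj : x j = ∑ i, (n i : ℝ) * v i j := by
        rw [hn]; simp [Finset.sum_apply]
      have hxj2 : x j = t⁻¹ * (y' j - E) - b' j := rfl
      have hyj : y' j = E + t * x j + t * b' j := by
        rw [hxj2]; field_simp; ring
      have h5 : (y' - ∑ i, n i • w i) j = y' j - ∑ i, (n i : ℝ) * w i j := by
        simp [Finset.sum_apply]
      rw [h5, hyj, hxj, Finset.mul_sum]
      have hsum : ∑ i, (n i : ℝ) * (t * v i j - w i j)
          = ∑ i, t * ((n i : ℝ) * v i j) - ∑ i, (n i : ℝ) * w i j := by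
        rw [← Finset.sum_sub_distrib]
        exact Finset.sum_congr rfl fun i _ => by ring
      rw [hsum]
      ring
    refine ⟨y' - ∑ i, n i • w i, ?_, ?_, ?_⟩
    · intro j
      rw [hbj j]
      have h6 := (abs_le.mp (herr' j)).1
      have h7 : 0 ≤ t * b' j := mul_nonneg (le_of_lt ht0) (hb'0 j)
      linarith
    · calc ∑ j, (y' - ∑ i, n i • w i) j
          ≤ ∑ j, (E + t * b' j + E) := by
            refine Finset.sum_le_sum fun j _ => ?_
            rw [hbj j]
            have h6 := (abs_le.mp (herr' j)).2
            linarith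
        _ = t * ∑ j, b' j + 2 * d * E := by
            rw [Finset.sum_add_distrib, Finset.sum_add_distrib, ← Finset.mul_sum,
              Finset.sum_const, Finset.card_univ, Fintype.card_fin, nsmul_eq_mul]
            ring
        _ ≤ t * k + 2 * d * E := by
            have := mul_le_mul_of_nonneg_left hb'sum (le_of_lt ht0)
            linarith
    · have heq : y - (y' - ∑ i, n i • w i) = ∑ i, (m i + n i) • w i := by
        rw [hy'def]
        funext j
        simp only [Pi.sub_apply, Finset.sum_apply, Pi.add_apply, add_smul,
          zsmul_eq_mul, Pi.mul_apply, Pi.intCast_apply]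
        rw [Finset.sum_add_distrib]
        push_cast
        ring
      rw [heq]
      exact (zspan_mem w _).mpr ⟨fun i => m i + n i, rfl⟩
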